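/- If a multigraph G is 2l-partition-connected for a set function l on subsets of V(G) with l(∅)=0, then G has a bipartite spanning subgraph H that is l-partition-connected and satisfies d_H(X) ≥ d_G(X)/2 for every vertex subset X. -/
import Mathlib


open Finset

namespace Paper

variable {V : Type*} [Fintype V] [DecidableEq V]

/-- Bool test: the edge `e` has exactly one end in `X`. -/
def crossB (X : Finset V) : Sym2 V → Bool :=
  Sym2.lift ⟨fun a b => xor (decide (a ∈ X)) (decide (b ∈ X)), by
    intro a b; simp [Bool.xor_comm]⟩

/-- Bool test: both ends of the edge `e` lie in `X`. -/
def bothB (X : Finset V) : Sym2 V → Bool :=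
  Sym2.lift ⟨fun a b => decide (a ∈ X) && decide (b ∈ X), by
    intro a b; simp [Bool.and_comm]⟩

/-- A finite multigraph on vertex set `V`: a multiset of loopless edges. -/
structure MGraph (V : Type*) where
  edges : Multiset (Sym2 V)
  loopless : ∀ e ∈ edges, ¬ e.IsDiag

/-- Number of edges of the edge multiset `E` with exactly one end in `X`. -/
def cutE (E : Multiset (Sym2 V)) (X : Finset V) : ℕ :=
  (E.filter (fun e => crossB X e = true)).card

/-- `d_G(X)`: number of edges of `G` with exactly one end in `X`. -/
def cut (G : MGraph V) (X : Finset V) : ℕ := cutE G.edges X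

/-- Degree of a vertex in a multigraph. -/
def deg (G : MGraph V) (v : V) : ℕ := cut G {v}

/-- Number of edges of `E` with both ends in `S`. -/
def insideE (E : Multiset (Sym2 V)) (S : Finset V) : ℕ :=
  (E.filter (fun e => bothB S e = true)).card

/-- `P` is a partition of the vertex set `W` into nonempty parts. -/
def IsPartitionOf (W : Finset V) (P : Finset (Finset V)) : Prop :=
  (∀ A ∈ P, A.Nonempty) ∧ (∀ A ∈ P, ∀ B ∈ P, A ≠ B → Disjoint A B) ∧ P.sup id = W

/-- Number of edges of `E` joining different parts of `P`. -/
def ePart (E : Multiset (Sym2 V)) (P : Finset (Finset V)) : ℕ :=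
  (E.filter (fun e => decide (∀ A ∈ P, bothB A e = false) = true)).card

/-- The edge multiset `E`, restricted to the vertex set `W`, is `l`-partition-connected:
for every partition `P` of `W`, the number of edges (inside `W`) joining different parts
is at least `Σ_{A∈P} l(A) − l(W)`. -/
def LPCOn (E : Multiset (Sym2 V)) (W : Finset V) (l : Finset V → ℝ) : Prop :=
  ∀ P : Finset (Finset V), IsPartitionOf W P →
    (ePart (E.filter (fun e => bothB W e = true)) P : ℝ) ≥ (∑ A ∈ P, l A) - l W

/-- The multigraph `G` is `l`-partition-connected. -/
def LPC (G : MGraph V) (l : Finset V → ℝ) : Prop := LPCOn G.edges Finset.univ l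

/-- `t`-partition-connectivity (constant function `t`). -/
def PC (G : MGraph V) (t : ℝ) : Prop := LPC G (fun _ => t)

/-- `m`-tree-connectivity, via the Nash-Williams–Tutte theorem identified with
`m`-partition-connectivity. -/
def TreeConn (m : ℕ) (G : MGraph V) : Prop := PC G (m : ℝ)

/-- `G` is properly `c`-colorable. -/
def MColorable (c : ℕ) (G : MGraph V) : Prop :=
  ∃ f : V → Fin c, ∀ a b : V, s(a, b) ∈ G.edges → f a ≠ f b

/-- `G` is bipartite. -/
def MBipartite (G : MGraph V) : Prop := MColorable 2 G

/-- `P` is the partition of `W` into the (vertex sets of the) `l`-partition-connected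
components of the graph with edge multiset `E` restricted to `W`: each part induces an
`l`-partition-connected subgraph, and every set inducing an `l`-partition-connected
subgraph lies inside one part. -/
def IsLPCComponents (E : Multiset (Sym2 V)) (W : Finset V) (l : Finset V → ℝ)
    (P : Finset (Finset V)) : Prop :=
  IsPartitionOf W P ∧ (∀ A ∈ P, LPCOn E A l) ∧
    ∀ B ⊆ W, B.Nonempty → LPCOn E B l → ∃ A ∈ P, B ⊆ A

/-- `Θ_l` computed with respect to the component partition `P` of `W`. -/
noncomputable def ThetaVal (E : Multiset (Sym2 V)) (W : Finset V) (l : Finset V → ℝ)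
    (P : Finset (Finset V)) : ℝ :=
  (∑ A ∈ P, l A) - (ePart (E.filter (fun e => bothB W e = true)) P : ℝ)

/-- Intersecting supermodular set function. -/
def IntersectingSupermodular (l : Finset V → ℝ) : Prop :=
  ∀ A B : Finset V, (A ∩ B).Nonempty → l (A ∩ B) + l (A ∪ B) ≥ l A + l B

/-- Nonincreasing set function. -/
def Nonincreasing (l : Finset V → ℝ) : Prop :=
  ∀ A B : Finset V, A.Nonempty → A ⊆ B → l A ≥ l B

/-- Edge multiset of a simple graph. -/
noncomputable def SGedges (G : SimpleGraph V) : Multiset (Sym2 V) :=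
  (Set.toFinite G.edgeSet).toFinset.val

/-- `m`-tree-connectivity of a simple graph, via partition-connectivity. -/
noncomputable def TreeConnSG (m : ℕ) (G : SimpleGraph V) : Prop :=
  LPCOn (SGedges G) Finset.univ (fun _ => (m : ℝ))

/-- Degree in a simple graph. -/
noncomputable def degSG (G : SimpleGraph V) (v : V) : ℕ := Nat.card (G.neighborSet v)

/-- `G` is `t`-tough. -/
def Tough (t : ℝ) (G : SimpleGraph V) : Prop :=
  ∀ S : Finset V,
    (Nat.card ((G.induce ((↑S : Set V)ᶜ)).ConnectedComponent) : ℝ) ≤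
      max 1 ((S.card : ℝ) / t)

/-- Bool test: the two ends of `e` receive different values under `f`. -/
def diffB {c : ℕ} (f : V → Fin c) : Sym2 V → Bool :=
  Sym2.lift ⟨fun a b => decide (f a ≠ f b), by
    intro a b; simp [ne_comm]⟩

end Paper

open Paper

section Aux

open Paper

variable {V : Type*} [Fintype V] [DecidableEq V]

def flip2 : Fin 2 → Fin 2 := fun x => if x = 0 then 1 else 0

lemma flip2_ne : ∀ x y : Fin 2, (¬ flip2 x = y) ↔ x = y := by decide

lemma flip2_ne' : ∀ x y : Fin 2, (¬ x = flip2 y) ↔ x = y := by decide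

lemma flip2_inj : ∀ x y : Fin 2, (flip2 x = flip2 y) ↔ x = y := by decide

lemma crossB_mk (X : Finset V) (a b : V) :
    crossB X s(a, b) = true ↔ ((a ∈ X ∧ b ∉ X) ∨ (a ∉ X ∧ b ∈ X)) := by
  simp [crossB]; tauto

lemma bothB_mk (X : Finset V) (a b : V) :
    bothB X s(a, b) = true ↔ a ∈ X ∧ b ∈ X := by
  simp [bothB]

lemma diffB_mk {c : ℕ} (f : V → Fin c) (a b : V) :
    diffB f s(a, b) = true ↔ f a ≠ f b := by
  simp [diffB]

lemma diffB_flip (f : V → Fin 2) (X : Finset V) (e : Sym2 V) :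
    (diffB (fun v => if v ∈ X then flip2 (f v) else f v) e = true) ↔
      (if crossB X e = true then ¬ (diffB f e = true) else diffB f e = true) := by
  induction e using Sym2.ind with
  | _ a b =>
    by_cases ha : a ∈ X <;> by_cases hb : b ∈ X <;>
      simp [diffB_mk, crossB_mk, ha, hb, flip2_ne, flip2_ne', flip2_inj]

lemma card_filter_cons {α : Type*} (p : α → Prop) [DecidablePred p] (e : α) (E : Multiset α) :
    (Multiset.filter p (e ::ₘ E)).card = (if p e then 1 else 0) + (Multiset.filter p E).card := by
  by_cases h : p e
  · rw [Multiset.filter_cons_of_pos _ h, Multiset.card_cons, if_pos h]; omega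
  · rw [Multiset.filter_cons_of_neg _ h, if_neg h]; omega

lemma cut_le_two_mul {E : Multiset (Sym2 V)} (f : V → Fin 2)
    (hf : ∀ g : V → Fin 2, (E.filter (fun e => diffB g e = true)).card ≤
      (E.filter (fun e => diffB f e = true)).card)
    (X : Finset V) :
    cutE E X ≤ 2 * cutE (E.filter (fun e => diffB f e = true)) X := by
  classical
  have hmax := hf (fun v => if v ∈ X then flip2 (f v) else f v)
  have hsplit : ∀ (p : Sym2 V → Prop), ∀ _ : DecidablePred p,
      (E.filter p).card
        = ((E.filter (fun e => crossB X e = true)).filter p).card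
          + ((E.filter (fun e => ¬ crossB X e = true)).filter p).card := by
    intro p _
    conv_lhs => rw [← Multiset.filter_add_not (fun e => crossB X e = true) E]
    rw [Multiset.filter_add, Multiset.card_add]
  have h1 : ((E.filter (fun e => crossB X e = true)).filter
        (fun e => diffB (fun v => if v ∈ X then flip2 (f v) else f v) e = true))
      = ((E.filter (fun e => crossB X e = true)).filter (fun e => ¬ diffB f e = true)) := by
    apply Multiset.filter_congr
    intro e he
    rw [Multiset.mem_filter] at he
    rw [diffB_flip, if_pos he.2]
  have h2 : ((E.filter (fun e => ¬ crossB X e = true)).filter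
        (fun e => diffB (fun v => if v ∈ X then flip2 (f v) else f v) e = true))
      = ((E.filter (fun e => ¬ crossB X e = true)).filter (fun e => diffB f e = true)) := by
    apply Multiset.filter_congr
    intro e he
    rw [Multiset.mem_filter] at he
    rw [diffB_flip, if_neg he.2]
  rw [hsplit _ inferInstance, hsplit _ inferInstance, h1, h2] at hmax
  have key : ((E.filter (fun e => crossB X e = true)).filter (fun e => ¬ diffB f e = true)).card
      ≤ ((E.filter (fun e => crossB X e = true)).filter (fun e => diffB f e = true)).card := by
    omega
  have hcutG : cutE E X
      = ((E.filter (fun e => crossB X e = true)).filter (fun e => diffB f e = true)).card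
        + ((E.filter (fun e => crossB X e = true)).filter (fun e => ¬ diffB f e = true)).card := by
    rw [cutE, ← Multiset.card_add, Multiset.filter_add_not]
  have hcomm : ((E.filter (fun e => diffB f e = true)).filter (fun e => crossB X e = true))
      = ((E.filter (fun e => crossB X e = true)).filter (fun e => diffB f e = true)) := by
    rw [Multiset.filter_filter, Multiset.filter_filter]
    exact Multiset.filter_congr (fun e _ => and_comm)
  have hcutH : cutE (E.filter (fun e => diffB f e = true)) X
      = ((E.filter (fun e => crossB X e = true)).filter (fun e => diffB f e = true)).card := by
    rw [cutE, hcomm]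
  rw [hcutG, hcutH]
  omega

lemma per_edge (P : Finset (Finset V)) (hP : IsPartitionOf Finset.univ P) (e : Sym2 V) :
    ∑ A ∈ P, (if crossB A e = true then 1 else 0)
      = 2 * (if (∀ A ∈ P, bothB A e = false) then 1 else 0) := by
  classical
  obtain ⟨-, hdisj, hsup⟩ := hP
  have huniq : ∀ v : V, ∀ A ∈ P, ∀ B ∈ P, v ∈ A → v ∈ B → A = B := by
    intro v A hA B hB hvA hvB
    by_contra hne
    exact (Finset.disjoint_left.mp (hdisj A hA B hB hne)) hvA hvB
  have hmem : ∀ v : V, ∃ A ∈ P, v ∈ A := by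
    intro v
    have hv : v ∈ P.sup id := hsup ▸ Finset.mem_univ v
    simpa using Finset.mem_sup.mp hv
  induction e using Sym2.ind with
  | _ a b =>
    by_cases hcase : ∃ A ∈ P, a ∈ A ∧ b ∈ A
    · obtain ⟨A0, hA0, haA0, hbA0⟩ := hcase
      have hR : ¬ (∀ A ∈ P, bothB A s(a, b) = false) := by
        intro h
        have h1 := h A0 hA0
        have h2 : bothB A0 s(a, b) = true := (bothB_mk _ _ _).mpr ⟨haA0, hbA0⟩
        rw [h2] at h1
        cases h1
      rw [if_neg hR, mul_zero]
      apply Finset.sum_eq_zero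
      intro A hA
      rw [if_neg]
      intro hc
      rcases (crossB_mk _ _ _).mp hc with ⟨haA, hbA⟩ | ⟨haA, hbA⟩
      · exact hbA (by rw [huniq a A hA A0 hA0 haA haA0]; exact hbA0)
      · exact haA (by rw [huniq b A hA A0 hA0 hbA hbA0]; exact haA0)
    · push_neg at hcase
      obtain ⟨Aa, hAa, haa⟩ := hmem a
      obtain ⟨Ab, hAb, hbb⟩ := hmem b
      have hba : b ∉ Aa := hcase Aa hAa haa
      have hab : a ∉ Ab := fun h => hcase Ab hAb h hbb
      have hne : Aa ≠ Ab := fun h => hab (h ▸ haa)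
      have hR : (∀ A ∈ P, bothB A s(a, b) = false) := by
        intro A hA
        by_contra h
        have ht : bothB A s(a, b) = true := by
          simpa using h
        obtain ⟨h1, h2⟩ := (bothB_mk _ _ _).mp ht
        exact hcase A hA h1 h2
      rw [if_pos hR, mul_one]
      have hfilt : P.filter (fun A => crossB A s(a, b) = true) = {Aa, Ab} := by
        ext A
        simp only [Finset.mem_filter, Finset.mem_insert, Finset.mem_singleton]
        constructor
        · rintro ⟨hA, hc⟩
          rcases (crossB_mk _ _ _).mp hc with ⟨h1, _⟩ | ⟨_, h2⟩
          · exact Or.inl (huniq a A hA Aa hAa h1 haa)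
          · exact Or.inr (huniq b A hA Ab hAb h2 hbb)
        · rintro (rfl | rfl)
          · exact ⟨hAa, (crossB_mk _ _ _).mpr (Or.inl ⟨haa, hba⟩)⟩
          · exact ⟨hAb, (crossB_mk _ _ _).mpr (Or.inr ⟨hab, hbb⟩)⟩
      calc ∑ A ∈ P, (if crossB A s(a, b) = true then 1 else 0)
          = (P.filter (fun A => crossB A s(a, b) = true)).card := (Finset.card_filter _ _).symm
        _ = ({Aa, Ab} : Finset (Finset V)).card := by rw [hfilt]
        _ = 2 := by rw [Finset.card_insert_of_notMem (by simpa using hne), Finset.card_singleton]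

lemma sum_cutE (P : Finset (Finset V)) (hP : IsPartitionOf Finset.univ P)
    (E : Multiset (Sym2 V)) :
    ∑ A ∈ P, cutE E A = 2 * ePart E P := by
  classical
  induction E using Multiset.induction_on with
  | empty => simp [cutE, ePart]
  | cons e E ih =>
    have hcut : ∀ A : Finset V, cutE (e ::ₘ E) A
        = (if crossB A e = true then 1 else 0) + cutE E A := by
      intro A
      exact card_filter_cons _ e E
    have hep : ePart (e ::ₘ E) P
        = (if (∀ A ∈ P, bothB A e = false) then 1 else 0) + ePart E P := by
      rw [ePart, card_filter_cons]
      have h0 : (decide (∀ A ∈ P, bothB A e = false) = true) ↔ (∀ A ∈ P, bothB A e = false) := by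
        simp
      rw [if_congr h0 rfl rfl]
      rfl
    simp only [hcut, hep, Finset.sum_add_distrib, per_edge P hP e, ih]
    ring

lemma filter_both_univ (E : Multiset (Sym2 V)) :
    E.filter (fun e => bothB (Finset.univ : Finset V) e = true) = E := by
  rw [Multiset.filter_eq_self]
  intro e _
  induction e using Sym2.ind with
  | _ a b => exact (bothB_mk _ _ _).mpr ⟨Finset.mem_univ a, Finset.mem_univ b⟩

end Aux

theorem stmt4 {V : Type*} [Fintype V] [DecidableEq V] (G : MGraph V)
    (l : Finset V → ℝ) (hl0 : l ∅ = 0)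
    (hpc : LPC G (fun A => 2 * l A)) :
    ∃ H : MGraph V, H.edges ≤ G.edges ∧ MBipartite H ∧ LPC H l ∧
      ∀ X : Finset V, 2 * cut H X ≥ cut G X := by
  classical
  obtain ⟨f, hf⟩ := Finite.exists_max
    (fun g : V → Fin 2 => (G.edges.filter (fun e => diffB g e = true)).card)
  refine ⟨⟨G.edges.filter (fun e => diffB f e = true), ?_⟩,
    Multiset.filter_le _ _, ⟨f, ?_⟩, ?_, ?_⟩
  · intro e he
    exact G.loopless e (Multiset.mem_of_mem_filter he)
  · intro a b hab
    exact (diffB_mk f a b).mp (Multiset.mem_filter.mp hab).2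
  · intro P hP
    have hG := hpc P hP
    simp only [] at hG
    rw [filter_both_univ] at hG
    show (ePart ((G.edges.filter (fun e => diffB f e = true)).filter
        (fun e => bothB Finset.univ e = true)) P : ℝ) ≥ _
    rw [filter_both_univ]
    have hsum : ∑ A ∈ P, cutE G.edges A
        ≤ ∑ A ∈ P, 2 * cutE (G.edges.filter (fun e => diffB f e = true)) A :=
      Finset.sum_le_sum fun A _ => cut_le_two_mul f hf A
    rw [sum_cutE P hP, ← Finset.mul_sum, sum_cutE P hP] at hsum
    have h2 : ePart G.edges P
        ≤ 2 * ePart (G.edges.filter (fun e => diffB f e = true)) P := by omega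
    have h2' : (ePart G.edges P : ℝ)
        ≤ 2 * (ePart (G.edges.filter (fun e => diffB f e = true)) P : ℝ) := by
      exact_mod_cast h2
    have hsum2 : ∑ A ∈ P, 2 * l A = 2 * ∑ A ∈ P, l A := by rw [Finset.mul_sum]
    linarith [hG]
  · intro X
    show 2 * cutE (G.edges.filter (fun e => diffB f e = true)) X ≥ cutE G.edges X
    exact cut_le_two_mul f hf X
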